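/- For all real λ, w with λ ≥ 0 and w ≥ 0, e^λ(1/(e^{λ+w}-1) - (λ+w)/(e^{λ+w}-1)² + (1+λ-e^λ)/(e^λ-1)²) ≤ 0, where for λ = 0 or λ+w = 0 the expressions are interpreted by their limits. -/

import Mathlib

open Real

noncomputable def Fgb (x : ℝ) : ℝ := (Real.exp x - 1 - x) / (Real.exp x - 1) ^ 2

lemma exp_sub_one_pos {x : ℝ} (hx : 0 < x) : 0 < Real.exp x - 1 := by
  have := Real.add_one_lt_exp (ne_of_gt hx)
  linarith

lemma Fgb_hasDeriv {x : ℝ} (hx : 0 < x) :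
    HasDerivAt Fgb
      (((Real.exp x - 1) * (Real.exp x - 1) ^ 2 -
        (Real.exp x - 1 - x) * (2 * (Real.exp x - 1) ^ 1 * Real.exp x)) /
        ((Real.exp x - 1) ^ 2) ^ 2) x := by
  have h0 : Real.exp x - 1 ≠ 0 := ne_of_gt (exp_sub_one_pos hx)
  have hu : HasDerivAt (fun y => Real.exp y - 1 - y) (Real.exp x - 1) x := by
    simpa using ((Real.hasDerivAt_exp x).sub_const 1).fun_sub (hasDerivAt_id x)
  have hv : HasDerivAt (fun y => (Real.exp y - 1) ^ 2)
      (2 * (Real.exp x - 1) ^ 1 * Real.exp x) x := by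
    simpa using ((Real.hasDerivAt_exp x).sub_const 1).fun_pow 2
  exact hu.div hv (pow_ne_zero 2 h0)

lemma Fgb_deriv_neg {x : ℝ} (hx : 0 < x) : deriv Fgb x < 0 := by
  rw [(Fgb_hasDeriv hx).deriv]
  have h1 : 0 < Real.exp x - 1 := exp_sub_one_pos hx
  have hq : 1 + x + x ^ 2 / 2 ≤ Real.exp x := Real.quadratic_le_exp_of_nonneg hx.le
  -- key: exp x ^ 2 - 2 x exp x - 1 > 0
  have hkey : 0 < Real.exp x ^ 2 - 2 * x * Real.exp x - 1 := by
    nlinarith [sq_nonneg (Real.exp x - (1 + x + x ^ 2 / 2)), sq_nonneg x, hx.le,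
      mul_pos hx hx]
  have hnum : (Real.exp x - 1) * (Real.exp x - 1) ^ 2 -
      (Real.exp x - 1 - x) * (2 * (Real.exp x - 1) ^ 1 * Real.exp x) < 0 := by
    have : (Real.exp x - 1) * (Real.exp x - 1) ^ 2 -
        (Real.exp x - 1 - x) * (2 * (Real.exp x - 1) ^ 1 * Real.exp x)
        = (Real.exp x - 1) * (-(Real.exp x ^ 2 - 2 * x * Real.exp x - 1)) := by ring
    rw [this]
    exact mul_neg_of_pos_of_neg h1 (by linarith)
  exact div_neg_of_neg_of_pos hnum (by positivity)

lemma Fgb_strictAnti : StrictAntiOn Fgb (Set.Ioi 0) := by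
  apply strictAntiOn_of_deriv_neg (convex_Ioi 0)
  · apply ContinuousOn.div
    · fun_prop
    · fun_prop
    · intro x hx
      exact pow_ne_zero 2 (ne_of_gt (exp_sub_one_pos hx))
  · intro x hx
    rw [interior_Ioi] at hx
    exact Fgb_deriv_neg hx

theorem gB_lambda_deriv_nonpos (lam w : ℝ) (hlam : 0 < lam) (hw : 0 < w) :
    Real.exp lam * (1 / (Real.exp (lam + w) - 1)
      - (lam + w) / (Real.exp (lam + w) - 1) ^ 2
      + (1 + lam - Real.exp lam) / (Real.exp lam - 1) ^ 2) ≤ 0 := by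
  have h1 : 0 < Real.exp lam - 1 := exp_sub_one_pos hlam
  have h2 : 0 < Real.exp (lam + w) - 1 := exp_sub_one_pos (by linarith)
  have hmono := Fgb_strictAnti (Set.mem_Ioi.mpr hlam)
      (Set.mem_Ioi.mpr (show (0:ℝ) < lam + w by linarith)) (by linarith)
  have heq : 1 / (Real.exp (lam + w) - 1)
      - (lam + w) / (Real.exp (lam + w) - 1) ^ 2
      + (1 + lam - Real.exp lam) / (Real.exp lam - 1) ^ 2
      = Fgb (lam + w) - Fgb lam := by
    unfold Fgb
    field_simp
    ring
  rw [heq]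
  have : Fgb (lam + w) - Fgb lam ≤ 0 := by unfold Fgb at hmono ⊢; linarith
  exact mul_nonpos_of_nonneg_of_nonpos (Real.exp_pos lam).le this
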